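/- Let A ∈ ℝ^{M×N} be any matrix. If there exists a pointwise function f : ℝ → ℝ such that the entrywise-applied matrix f(A) has rank at least K, then there also exists a strictly increasing, continuous, bijective (on ℝ), piecewise differentiable function g : ℝ → ℝ such that g(A) has rank at least K. -/

import Mathlib

open Matrix Filter Polynomial


-- rank of column-selected submatrix
lemma rank_sub_cols {p q K : ℕ} (B : Matrix (Fin p) (Fin q) ℝ) (c : Fin K → Fin q) :
    (B.submatrix id c).rank ≤ B.rank := by
  rw [rank_eq_finrank_span_cols, rank_eq_finrank_span_cols]
  apply Submodule.finrank_mono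
  apply Submodule.span_mono
  rintro _ ⟨j, rfl⟩
  exact ⟨c j, rfl⟩

lemma rank_sub_rows {p q K : ℕ} (B : Matrix (Fin p) (Fin q) ℝ) (r : Fin K → Fin p) :
    (B.submatrix r id).rank ≤ B.rank := by
  rw [← rank_transpose, ← B.rank_transpose]
  exact rank_sub_cols Bᵀ r

lemma rank_sub_le {p q K : ℕ} (B : Matrix (Fin p) (Fin q) ℝ) (r : Fin K → Fin p)
    (c : Fin K → Fin q) : (B.submatrix r c).rank ≤ B.rank := by
  have : B.submatrix r c = (B.submatrix r id).submatrix id c := by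
    simp [Matrix.submatrix_submatrix]
  rw [this]
  exact (rank_sub_cols _ c).trans (rank_sub_rows B r)

lemma le_rank_of_det {p q K : ℕ} (B : Matrix (Fin p) (Fin q) ℝ) (r : Fin K → Fin p)
    (c : Fin K → Fin q) (h : (B.submatrix r c).det ≠ 0) : K ≤ B.rank := by
  have hu : IsUnit (B.submatrix r c) := by
    rw [Matrix.isUnit_iff_isUnit_det]
    exact isUnit_iff_ne_zero.mpr h
  have := Matrix.rank_of_isUnit _ hu
  calc K = (B.submatrix r c).rank := by rw [this, Fintype.card_fin]
    _ ≤ B.rank := rank_sub_le B r c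

lemma pick_cols {p q K : ℕ} (B : Matrix (Fin p) (Fin q) ℝ) (hK : K ≤ B.rank) :
    ∃ c : Fin K → Fin q, LinearIndependent ℝ (fun i => Bᵀ (c i)) := by
  classical
  obtain ⟨s, hst, hsp, hli⟩ := exists_linearIndependent ℝ (Set.range Bᵀ)
  have hfin : s.Finite := hli.setFinite
  haveI : Fintype s := hfin.fintype
  have hcard : K ≤ s.toFinset.card := by
    have h1 : B.rank = Module.finrank ℝ (Submodule.span ℝ s) := by
      rw [rank_eq_finrank_span_cols, hsp]
      rfl
    have h2 : Module.finrank ℝ (Submodule.span ℝ s) = s.toFinset.card :=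
      finrank_span_set_eq_card hli
    omega
  set t := s.toFinset with ht
  let e : Fin K → t := fun i => t.equivFin.symm (Fin.castLE hcard i)
  have he : Function.Injective e := by
    intro a b hab
    simpa using t.equivFin.symm.injective hab
  have hmem : ∀ i, (e i : Fin p → ℝ) ∈ Set.range Bᵀ := fun i => hst (Set.mem_toFinset.mp (e i).2)
  choose c hc using fun i => hmem i
  refine ⟨c, ?_⟩
  have : (fun i => Bᵀ (c i)) = (fun x : s => (x : Fin p → ℝ)) ∘
      (fun i => (⟨(e i : Fin p → ℝ), Set.mem_toFinset.mp (e i).2⟩ : s)) := by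
    funext i; simp [hc i]
  rw [this]
  refine hli.comp _ ?_
  intro a b hab
  apply he
  have hv : (e a : Fin p → ℝ) = (e b : Fin p → ℝ) := congrArg (fun x : s => (x : Fin p → ℝ)) hab
  exact Subtype.ext hv

lemma exists_det_submatrix {p q K : ℕ} (B : Matrix (Fin p) (Fin q) ℝ) (hK : K ≤ B.rank) :
    ∃ (r : Fin K → Fin p) (c : Fin K → Fin q), (B.submatrix r c).det ≠ 0 := by
  obtain ⟨c, hc⟩ := pick_cols B hK
  have hB1 : (B.submatrix id c)ᵀ.rank = K := by
    have : LinearIndependent ℝ (fun i => (B.submatrix id c)ᵀ i) := hc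
    exact this.rank_matrix.trans (Fintype.card_fin K)
  obtain ⟨r, hr⟩ := pick_cols (B.submatrix id c)ᵀ (le_of_eq hB1.symm)
  refine ⟨r, c, ?_⟩
  have hli : LinearIndependent ℝ (fun i => (B.submatrix r c) i) := hr
  have := Matrix.linearIndependent_rows_iff_isUnit.mp hli
  rw [Matrix.isUnit_iff_isUnit_det, isUnit_iff_ne_zero] at this
  exact this

section fam
variable {m : ℕ} (b : ℝ) (d : Fin m → ℝ)

noncomputable def gfam (x : ℝ) : ℝ := ∑ k : Fin m, d k * (x - b) ^ (2 * (k : ℕ) + 1)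

lemma gfam_strictMono (hm : 0 < m) (hd : ∀ k, 0 < d k) : StrictMono (gfam b d) := by
  haveI : NeZero m := ⟨by omega⟩
  intro u v huv
  apply Finset.sum_lt_sum_of_nonempty Finset.univ_nonempty
  intro k _
  have hodd : Odd (2 * (k : ℕ) + 1) := ⟨k, by ring⟩
  exact mul_lt_mul_of_pos_left (hodd.strictMono_pow (sub_lt_sub_right huv b)) (hd k)

lemma gfam_continuous : Continuous (gfam b d) := by
  unfold gfam
  fun_prop

lemma gfam_differentiable : Differentiable ℝ (gfam b d) := by
  unfold gfam
  apply Differentiable.fun_sum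
  intro k _
  exact ((differentiable_id.sub_const b).pow _).const_mul _

lemma gfam_neg (x : ℝ) : gfam b d (2 * b - x) = -gfam b d x := by
  unfold gfam
  rw [← Finset.sum_neg_distrib]
  apply Finset.sum_congr rfl
  intro k _
  have hodd : Odd (2 * (k : ℕ) + 1) := ⟨k, by ring⟩
  have : (2 * b - x - b) = -(x - b) := by ring
  rw [this, hodd.neg_pow, mul_neg]

lemma gfam_atTop (hm : 0 < m) (hd : ∀ k, 0 < d k) : Tendsto (gfam b d) atTop atTop := by
  haveI : NeZero m := ⟨by omega⟩
  have hlin : Tendsto (fun x : ℝ => d 0 * (x - b)) atTop atTop :=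
    (tendsto_atTop_add_const_right _ (-b) tendsto_id).const_mul_atTop (hd 0)
  apply tendsto_atTop_mono' _ _ hlin
  filter_upwards [eventually_ge_atTop b] with x hx
  have h0 : d 0 * (x - b) = d 0 * (x - b) ^ (2 * ((0 : Fin m) : ℕ) + 1) := by
    norm_num
  rw [h0]
  apply Finset.single_le_sum (f := fun k : Fin m => d k * (x - b) ^ (2 * (k : ℕ) + 1))
  · intro k _
    exact mul_nonneg (hd k).le (pow_nonneg (by linarith) _)
  · exact Finset.mem_univ _

lemma gfam_atBot (hm : 0 < m) (hd : ∀ k, 0 < d k) : Tendsto (gfam b d) atBot atBot := by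
  have h1 : Tendsto (fun x : ℝ => 2 * b - x) atBot atTop := by
    apply tendsto_atTop_add_const_left
    exact tendsto_neg_atBot_atTop
  have h2 : Tendsto (fun x => -(gfam b d (2 * b - x))) atBot atBot :=
    tendsto_neg_atTop_atBot.comp ((gfam_atTop b d hm hd).comp h1)
  convert h2 using 1
  funext x
  rw [gfam_neg, neg_neg]

lemma gfam_bijective (hm : 0 < m) (hd : ∀ k, 0 < d k) : Function.Bijective (gfam b d) :=
  ⟨(gfam_strictMono b d hm hd).injective,
    (gfam_continuous b d).surjective (gfam_atTop b d hm hd) (gfam_atBot b d hm hd)⟩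

end fam

theorem monotone_pointwise_rank (M N K : ℕ) (A : Matrix (Fin M) (Fin N) ℝ)
    (f : ℝ → ℝ) (hf : K ≤ (A.map f).rank) :
    ∃ g : ℝ → ℝ, StrictMono g ∧ Continuous g ∧ Function.Bijective g ∧
      (∃ s : Finset ℝ, ∀ x ∉ s, DifferentiableAt ℝ g x) ∧
      K ≤ (A.map g).rank := by
  classical
  set S : Finset ℝ := Finset.image (fun p : Fin M × Fin N => A p.1 p.2) Finset.univ with hSdef
  by_cases hS : S.Nonempty
  · -- main case
    set m := S.card with hmdef
    have hm : 0 < m := Finset.card_pos.mpr hS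
    haveI : NeZero m := ⟨by omega⟩
    set a : Fin m → ℝ := fun i => (S.orderIsoOfFin rfl i : ℝ) with hadef
    have ha_mem : ∀ i, a i ∈ S := fun i => (S.orderIsoOfFin rfl i).2
    have ha_inj : Function.Injective a := fun i j hij =>
      (S.orderIsoOfFin rfl).injective (Subtype.ext hij)
    have ha_surj : ∀ s ∈ S, ∃ i, a i = s := by
      intro s hs
      refine ⟨(S.orderIsoOfFin rfl).symm ⟨s, hs⟩, ?_⟩
      exact congrArg Subtype.val ((S.orderIsoOfFin rfl).apply_symm_apply ⟨s, hs⟩)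
    have hAS : ∀ i j, A i j ∈ S := fun i j =>
      Finset.mem_image_of_mem _ (Finset.mem_univ (i, j))
    set b : ℝ := S.min' hS - 1 with hbdef
    have hab : ∀ i, 0 < a i - b := by
      intro i
      have := S.min'_le _ (ha_mem i)
      simp only [hbdef]
      linarith
    set v : Fin m → ℝ := fun i => (a i - b) ^ 2 with hvdef
    have hv : Function.Injective v := by
      intro i j hij
      have hx := hab i; have hy := hab j
      have hfac : ((a i - b) - (a j - b)) * ((a i - b) + (a j - b)) = 0 := by
        simp only [hvdef] at hij
        linear_combination hij
      rcases mul_eq_zero.mp hfac with h | h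
      · exact ha_inj (by linarith)
      · linarith
    set W : Matrix (Fin m) (Fin m) ℝ :=
      Matrix.of (fun i k : Fin m => (a i - b) ^ (2 * (k : ℕ) + 1)) with hWdef
    have hWdet : W.det ≠ 0 := by
      have hWfac : W = Matrix.diagonal (fun i => a i - b) * Matrix.vandermonde v := by
        ext i k
        rw [Matrix.diagonal_mul]
        simp only [hWdef, Matrix.of_apply, Matrix.vandermonde_apply, hvdef]
        rw [pow_succ, pow_mul]
        exact mul_comm _ _
      rw [hWfac, Matrix.det_mul, Matrix.det_diagonal]
      apply mul_ne_zero
      · exact Finset.prod_ne_zero_iff.mpr fun i _ => ne_of_gt (hab i)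
      · exact Matrix.det_vandermonde_ne_zero_iff.mpr hv
    set cstar : Fin m → ℝ := W⁻¹.mulVec (fun i => f (a i)) with hcdef
    have hWc : W.mulVec cstar = fun i => f (a i) := by
      rw [hcdef, Matrix.mulVec_mulVec, Matrix.mul_nonsing_inv _ (isUnit_iff_ne_zero.mpr hWdet),
        Matrix.one_mulVec]
    have hgc : ∀ i, gfam b cstar (a i) = f (a i) := by
      intro i
      have h1 : gfam b cstar (a i) = W.mulVec cstar i := by
        simp only [gfam, Matrix.mulVec, dotProduct, hWdef, Matrix.of_apply]
        exact Finset.sum_congr rfl fun k _ => by ring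
      rw [h1, hWc]
    have hsplit : ∀ t x, gfam b (fun k => cstar k + t) x
        = gfam b cstar x + t * gfam b (fun _ : Fin m => (1 : ℝ)) x := by
      intro t x
      simp only [gfam, Finset.mul_sum, ← Finset.sum_add_distrib]
      exact Finset.sum_congr rfl fun k _ => by ring
    have hval : ∀ t, ∀ s ∈ S, gfam b (fun k => cstar k + t) s
        = f s + t * gfam b (fun _ : Fin m => (1 : ℝ)) s := by
      intro t s hs
      obtain ⟨i, rfl⟩ := ha_surj s hs
      rw [hsplit, hgc]
    obtain ⟨r, c, hdetf⟩ := exists_det_submatrix (A.map f) hf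
    set P : Polynomial ℝ := Matrix.det (Matrix.of fun i j : Fin K =>
      Polynomial.C (f (A (r i) (c j)))
        + Polynomial.X * Polynomial.C (gfam b (fun _ : Fin m => (1 : ℝ)) (A (r i) (c j)))) with hPdef
    have heval : ∀ t : ℝ, P.eval t
        = ((A.map (gfam b (fun k => cstar k + t))).submatrix r c).det := by
      intro t
      have h1 := RingHom.map_det (Polynomial.evalRingHom t) (Matrix.of fun i j : Fin K =>
        Polynomial.C (f (A (r i) (c j)))
          + Polynomial.X * Polynomial.C (gfam b (fun _ : Fin m => (1 : ℝ)) (A (r i) (c j))))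
      have h2 : P.eval t = Polynomial.evalRingHom t P := rfl
      rw [h2, hPdef, h1]
      congr 1
      ext i j
      simp only [RingHom.mapMatrix_apply, Matrix.map_apply, Matrix.of_apply,
        Matrix.submatrix_apply, Polynomial.coe_evalRingHom, Polynomial.eval_add,
        Polynomial.eval_mul, Polynomial.eval_C, Polynomial.eval_X]
      rw [hval t _ (hAS (r i) (c j))]
    have hP0 : P ≠ 0 := by
      intro h0
      have h1 : P.eval 0 = ((A.map f).submatrix r c).det := by
        rw [heval 0]
        congr 1
        ext i j
        simp only [Matrix.map_apply, Matrix.submatrix_apply]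
        rw [hval 0 _ (hAS (r i) (c j))]
        ring
      rw [h0] at h1
      simp only [Polynomial.eval_zero] at h1
      exact hdetf h1.symm
    set T : ℝ := Finset.univ.sup' Finset.univ_nonempty (fun k : Fin m => -cstar k) with hTdef
    have hroots : Set.Finite {x : ℝ | P.IsRoot x} := Polynomial.finite_setOf_isRoot hP0
    have hinf : (Set.Ioi T).Infinite := Set.Ioi_infinite T
    obtain ⟨t, ht⟩ := (hinf.diff hroots).nonempty
    have htT : T < t := ht.1
    have htP : P.eval t ≠ 0 := ht.2
    set d : Fin m → ℝ := fun k => cstar k + t with hddef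
    have hd : ∀ k, 0 < d k := by
      intro k
      have := Finset.le_sup' (fun k : Fin m => -cstar k) (Finset.mem_univ k)
      simp only [hddef]
      have : -cstar k ≤ T := this
      linarith
    refine ⟨gfam b d, gfam_strictMono b d hm hd, gfam_continuous b d,
      gfam_bijective b d hm hd, ⟨∅, fun x _ => (gfam_differentiable b d).differentiableAt⟩, ?_⟩
    apply le_rank_of_det (A.map (gfam b d)) r c
    rw [hddef, ← heval t]
    exact htP
  · -- degenerate case: no entries
    have hK0 : K = 0 := by
      rcases Nat.eq_zero_or_pos M with hM | hM
      · have h1 : (A.map f).rank ≤ M := Matrix.rank_le_height (A.map f)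
        omega
      rcases Nat.eq_zero_or_pos N with hN | hN
      · have h1 : (A.map f).rank ≤ N := Matrix.rank_le_width (A.map f)
        omega
      exact absurd (show S.Nonempty from ⟨A ⟨0, hM⟩ ⟨0, hN⟩,
        Finset.mem_image_of_mem _ (Finset.mem_univ ((⟨0, hM⟩, ⟨0, hN⟩) : Fin M × Fin N))⟩) hS
    exact ⟨id, strictMono_id, continuous_id, Function.bijective_id,
      ⟨∅, fun x _ => differentiableAt_id⟩, by omega⟩
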